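/- Let G(x) = Σ_{n≥0} Γ_n(τ)·x^n be the ordinary generating function, as a formal power series over ℚ[τ], of the associahedron γ-polynomials Γ_n(τ) = Σ_{i=0}^{⌊n/2⌋} (1/(i+1))·binom(2i,i)·binom(n,2i)·τ^i. Then G satisfies the quadratic equation G = 1 + x·G + τ·x²·G². -/

import Mathlib

open Finset Polynomial


lemma choose_conv (r s n : ℕ) :
    ∑ a ∈ range (n + 1), a.choose r * (n - a).choose s = (n + 1).choose (r + s + 1) := by
  induction n generalizing s with
  | zero =>
    simp only [range_one, sum_singleton, Nat.zero_sub]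
    rcases Nat.eq_zero_or_pos r with hr | hr
    · rcases Nat.eq_zero_or_pos s with hs | hs
      · simp [hr, hs]
      · simp [hr, Nat.choose_eq_zero_of_lt hs, Nat.choose_eq_zero_of_lt (by omega : 1 < s + 1)]
    · simp [Nat.choose_eq_zero_of_lt hr, Nat.choose_eq_zero_of_lt (by omega : 1 < r + s + 1)]
  | succ n ih =>
    cases s with
    | zero =>
      rw [Finset.sum_range_succ]
      have h : ∀ a ∈ range (n + 1), a.choose r * (n + 1 - a).choose 0 = a.choose r * (n - a).choose 0 := by
        intro a _; simp
      rw [Finset.sum_congr rfl h, ih 0]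
      have := Nat.choose_succ_succ (n + 1) r
      simp only [Nat.succ_eq_add_one] at this
      simp only [Nat.choose_zero_right, Nat.mul_one, Nat.add_zero] at *
      omega
    | succ s =>
      rw [Finset.sum_range_succ]
      have h : ∀ a ∈ range (n + 1),
          a.choose r * (n + 1 - a).choose (s + 1)
            = a.choose r * (n - a).choose (s + 1) + a.choose r * (n - a).choose s := by
        intro a ha
        rw [mem_range] at ha
        have e : n + 1 - a = (n - a) + 1 := by omega
        rw [e, Nat.choose_succ_succ, Nat.mul_add, Nat.add_comm]
      rw [Finset.sum_congr rfl h, Finset.sum_add_distrib, ih (s + 1), ih s]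
      have h2 : (0:ℕ).choose (s+1) = 0 := Nat.choose_eq_zero_of_lt (by omega)
      rw [Nat.sub_self, h2, Nat.mul_zero, Nat.add_zero]
      have := Nat.choose_succ_succ (n + 1) (r + s + 1)
      simp only [Nat.succ_eq_add_one] at this
      rw [show r + (s + 1) + 1 = r + s + 1 + 1 by omega]
      omega

lemma key_conv (n i : ℕ) :
    ∑ a ∈ range (n + 1), ∑ j ∈ range (i + 1),
      (catalan j * a.choose (2 * j)) * (catalan (i - j) * (n - a).choose (2 * (i - j)))
    = catalan (i + 1) * (n + 1).choose (2 * i + 1) := by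
  rw [Finset.sum_comm]
  have h1 : ∀ j ∈ range (i + 1),
      (∑ a ∈ range (n + 1),
        (catalan j * a.choose (2 * j)) * (catalan (i - j) * (n - a).choose (2 * (i - j))))
      = catalan j * catalan (i - j) * (n + 1).choose (2 * i + 1) := by
    intro j hj
    rw [mem_range] at hj
    have h2 : ∀ a ∈ range (n + 1),
        (catalan j * a.choose (2 * j)) * (catalan (i - j) * (n - a).choose (2 * (i - j)))
          = (catalan j * catalan (i - j)) * (a.choose (2 * j) * (n - a).choose (2 * (i - j))) := by
      intro a _; ring
    rw [Finset.sum_congr rfl h2, ← Finset.mul_sum, choose_conv,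
      show 2 * j + 2 * (i - j) + 1 = 2 * i + 1 by omega]
  rw [Finset.sum_congr rfl h1, ← Finset.sum_mul]
  congr 1
  rw [catalan_succ i, Finset.sum_range]

lemma cast_catalan (k : ℕ) :
    (catalan k : ℚ) = (1 / (k + 1 : ℚ)) * ((2 * k).choose k) := by
  have h : catalan k * (k + 1) = (2 * k).choose k := by
    rw [catalan_eq_centralBinom_div, Nat.div_mul_cancel (Nat.succ_dvd_centralBinom k),
      Nat.centralBinom]
  have h' : (catalan k : ℚ) * (k + 1) = ((2 * k).choose k : ℚ) := by exact_mod_cast congrArg (Nat.cast (R := ℚ)) h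
  field_simp at h' ⊢
  linarith


/-- The γ-polynomial of the associahedron `As^n`:
`Γ_n(τ) = Σ_{i=0}^{⌊n/2⌋} (1/(i+1))·binom(2i,i)·binom(n,2i)·τ^i`. -/
noncomputable def gammaAs (n : ℕ) : Polynomial ℚ :=
  ∑ i ∈ Finset.range (n / 2 + 1),
    Polynomial.C ((1 / (i + 1 : ℚ)) * ((2 * i).choose i) * (n.choose (2 * i))) *
      Polynomial.X ^ i

/-- The ordinary generating function `G(x) = Σ_{n≥0} Γ_n(τ)·x^n` over `ℚ[τ]`. -/
noncomputable def gammaAsSeries : PowerSeries (Polynomial ℚ) :=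
  PowerSeries.mk fun n => gammaAs n

lemma coeff_gammaAs (m k : ℕ) :
    (gammaAs m).coeff k = (catalan k : ℚ) * m.choose (2 * k) := by
  unfold gammaAs
  rw [Polynomial.finset_sum_coeff]
  simp only [Polynomial.coeff_C_mul, Polynomial.coeff_X_pow, mul_ite, mul_one, mul_zero]
  rw [Finset.sum_ite_eq (range (m / 2 + 1)) k]
  by_cases hk : k ∈ range (m / 2 + 1)
  · rw [if_pos hk, cast_catalan]
  · rw [if_neg hk]
    rw [mem_range] at hk
    rw [Nat.choose_eq_zero_of_lt (by omega : m < 2 * k)]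
    simp

lemma gammaAs_rec (n : ℕ) :
    gammaAs (n + 2) = gammaAs (n + 1)
      + Polynomial.X * ∑ a ∈ range (n + 1), gammaAs a * gammaAs (n - a) := by
  apply Polynomial.ext
  intro k
  rw [Polynomial.coeff_add]
  cases k with
  | zero =>
    simp only [coeff_gammaAs, Polynomial.coeff_X_mul_zero, Nat.mul_zero,
      Nat.choose_zero_right, add_zero]
  | succ i =>
    rw [Polynomial.coeff_X_mul, Polynomial.finset_sum_coeff]
    simp only [Polynomial.coeff_mul, coeff_gammaAs]
    have hsum : ∀ a ∈ range (n + 1),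
        (∑ x ∈ Finset.HasAntidiagonal.antidiagonal i,
          (catalan x.1 : ℚ) * a.choose (2 * x.1) * ((catalan x.2 : ℚ) * (n - a).choose (2 * x.2)))
        = ∑ j ∈ range (i + 1),
          (catalan j : ℚ) * a.choose (2 * j) * ((catalan (i - j) : ℚ) * (n - a).choose (2 * (i - j))) := by
      intro a _
      exact Finset.Nat.sum_antidiagonal_eq_sum_range_succ_mk
        (fun p => (catalan p.1 : ℚ) * a.choose (2 * p.1) * ((catalan p.2 : ℚ) * (n - a).choose (2 * p.2))) i
    rw [Finset.sum_congr rfl hsum]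
    have hkey := key_conv n i
    have hkeyQ : (∑ a ∈ range (n + 1), ∑ j ∈ range (i + 1),
        (catalan j : ℚ) * a.choose (2 * j) * ((catalan (i - j) : ℚ) * (n - a).choose (2 * (i - j))))
        = (catalan (i + 1) : ℚ) * (n + 1).choose (2 * i + 1) := by
      exact_mod_cast congrArg (Nat.cast (R := ℚ)) hkey
    rw [hkeyQ]
    have hp : (n + 2).choose (2 * (i + 1)) = (n + 1).choose (2 * i + 1) + (n + 1).choose (2 * (i + 1)) := by
      rw [show 2 * (i + 1) = (2 * i + 1) + 1 by ring]
      exact Nat.choose_succ_succ (n + 1) (2 * i + 1)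
    rw [hp]
    push_cast
    ring

/-- `G = 1 + x·G + τ·x²·G²`. -/
theorem gammaAsSeries_quadratic :
    gammaAsSeries =
      1 + PowerSeries.X * gammaAsSeries +
        PowerSeries.C (R := Polynomial ℚ) Polynomial.X * PowerSeries.X ^ 2 * gammaAsSeries ^ 2 := by
  apply PowerSeries.ext
  intro d
  rw [map_add, map_add]
  rw [show PowerSeries.C (R := Polynomial ℚ) Polynomial.X * PowerSeries.X ^ 2 * gammaAsSeries ^ 2
      = PowerSeries.C (R := Polynomial ℚ) Polynomial.X * (PowerSeries.X ^ 2 * gammaAsSeries ^ 2) by ring]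
  rw [PowerSeries.coeff_C_mul]
  unfold gammaAsSeries
  match d with
  | 0 =>
    rw [PowerSeries.coeff_zero_X_mul, PowerSeries.coeff_X_pow_mul' _ 2 0,
      if_neg (by omega : ¬ 2 ≤ 0)]
    simp [gammaAs]
  | 1 =>
    rw [PowerSeries.coeff_succ_X_mul, PowerSeries.coeff_mk, PowerSeries.coeff_mk,
      PowerSeries.coeff_X_pow_mul' _ 2 1]
    rw [PowerSeries.coeff_one]
    norm_num
    simp [gammaAs]
  | (n + 2 : ℕ) =>
    rw [PowerSeries.coeff_succ_X_mul, PowerSeries.coeff_mk, PowerSeries.coeff_mk,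
      show (n + 2 : ℕ) = n + 2 from rfl,
      PowerSeries.coeff_X_pow_mul _ 2 n, PowerSeries.coeff_one, if_neg (by omega : ¬ n + 2 = 0),
      zero_add]
    rw [sq, PowerSeries.coeff_mul]
    simp only [PowerSeries.coeff_mk]
    rw [Finset.Nat.sum_antidiagonal_eq_sum_range_succ_mk (fun p => gammaAs p.1 * gammaAs p.2) n]
    exact gammaAs_rec n
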